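/- For all integers N ≥ 2 and m with 1 ≤ m ≤ N−1, the complex number Σ_{k=0}^{N−1} (2πk/N²)·e^{2πikm/N} has modulus at most π/(2·min(m, N−m)). -/

import Mathlib

open Complex Finset

lemma key_sum17 (x : ℂ) (n : ℕ) :
    (x - 1) * ∑ k ∈ Finset.range n, (k : ℂ) * x ^ k
      = ((n : ℂ) - 1) * x ^ n - (∑ k ∈ Finset.range n, x ^ k) + 1 := by
  induction n with
  | zero => simp
  | succ n ih =>
    rw [Finset.sum_range_succ, Finset.sum_range_succ (fun k => x ^ k)]
    push_cast
    ring_nf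
    ring_nf at ih
    linear_combination ih

theorem stmt17 (N m : ℕ) (hN : 2 ≤ N) (hm1 : 1 ≤ m) (hm2 : m ≤ N - 1) :
    ‖(∑ k ∈ Finset.range N,
        (((2 * Real.pi * k / (N : ℝ) ^ 2 : ℝ)) : ℂ) *
          Complex.exp (2 * Real.pi * Complex.I * k * m / N))‖ ≤
      Real.pi / (2 * (min m (N - m) : ℕ)) := by
  have hmN : m < N := by omega
  have hNR : (0:ℝ) < N := by exact_mod_cast (by omega : 0 < N)
  have hNC : (N:ℂ) ≠ 0 := by exact_mod_cast hNR.ne'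
  set ω : ℂ := Complex.exp (2 * Real.pi * Complex.I * m / N) with hω
  -- rewrite each term
  have hterm : ∀ k ∈ Finset.range N,
      (((2 * Real.pi * k / (N : ℝ) ^ 2 : ℝ)) : ℂ) *
          Complex.exp (2 * Real.pi * Complex.I * k * m / N)
      = ((2 * Real.pi / (N:ℝ)^2 : ℝ) : ℂ) * ((k:ℂ) * ω ^ k) := by
    intro k _
    rw [hω, ← Complex.exp_nat_mul]
    have h1 : 2 * (Real.pi:ℂ) * Complex.I * k * m / N
        = (k:ℂ) * (2 * Real.pi * Complex.I * m / N) := by ring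
    push_cast
    rw [h1]
    ring
  rw [Finset.sum_congr rfl hterm, ← Finset.mul_sum]
  -- ω ^ N = 1
  have hωN : ω ^ N = 1 := by
    rw [hω, ← Complex.exp_nat_mul]
    have : (N:ℂ) * (2 * Real.pi * Complex.I * m / N) = (m:ℂ) * (2 * Real.pi * Complex.I) := by
      field_simp
    rw [this, Complex.exp_nat_mul_two_pi_mul_I]
  -- ω ≠ 1
  have hω1 : ω ≠ 1 := by
    intro h
    rw [hω, Complex.exp_eq_one_iff] at h
    obtain ⟨n, hn⟩ := h
    have hπ : (Real.pi:ℂ) ≠ 0 := by exact_mod_cast Real.pi_ne_zero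
    have hm' : (m:ℂ) = (n:ℂ) * N := by
      field_simp at hn
      have h2 : (2 * (Real.pi:ℂ) * Complex.I) * (m:ℂ)
          = (2 * (Real.pi:ℂ) * Complex.I) * ((n:ℂ) * N) := by linear_combination (2 * (Real.pi:ℂ) * Complex.I) * hn
      exact mul_left_cancel₀ (mul_ne_zero (mul_ne_zero two_ne_zero hπ) Complex.I_ne_zero) h2
    have hmz : (m:ℤ) = n * N := by exact_mod_cast hm'
    have hm1' : (1:ℤ) ≤ m := by exact_mod_cast hm1
    have hmN' : (m:ℤ) < N := by exact_mod_cast hmN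
    have hN' : (0:ℤ) < N := by exact_mod_cast (by omega : 0 < N)
    have hn0 : 0 < n := by nlinarith
    nlinarith
  -- geometric sum vanishes
  have hgeom : ∑ k ∈ Finset.range N, ω ^ k = 0 := by
    rw [geom_sum_eq hω1, hωN, sub_self, zero_div]
  -- the weighted sum
  have hsum : ∑ k ∈ Finset.range N, (k:ℂ) * ω ^ k = (N:ℂ) / (ω - 1) := by
    have h := key_sum17 ω N
    rw [hωN, hgeom] at h
    rw [eq_div_iff (sub_ne_zero.mpr hω1), mul_comm]
    rw [h]; ring
  rw [hsum]
  -- compute |ω - 1|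
  set θ : ℝ := 2 * Real.pi * m / N with hθ
  have hωθ : ω = Complex.exp ((θ:ℂ) * Complex.I) := by
    rw [hω]
    congr 1
    rw [hθ]
    push_cast
    ring
  have hhalf : θ / 2 = Real.pi * m / N := by rw [hθ]; ring
  have hsin_nonneg : 0 ≤ Real.sin (Real.pi * m / N) := by
    apply Real.sin_nonneg_of_nonneg_of_le_pi
    · positivity
    · rw [div_le_iff₀ hNR]
      have : (m:ℝ) ≤ N := by exact_mod_cast hmN.le
      nlinarith [Real.pi_pos]
  have habs : ‖ω - 1‖ = 2 * Real.sin (Real.pi * m / N) := by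
    rw [hωθ, Complex.norm_def, Complex.normSq_apply]
    simp only [Complex.sub_re, Complex.sub_im, Complex.exp_ofReal_mul_I_re,
      Complex.exp_ofReal_mul_I_im, Complex.one_re, Complex.one_im]
    have h2 : (Real.cos θ - 1) * (Real.cos θ - 1) + (Real.sin θ - 0) * (Real.sin θ - 0)
        = (2 * Real.sin (Real.pi * m / N)) ^ 2 := by
      have hs := Real.sin_sq_eq_half_sub (θ / 2)
      rw [hhalf] at hs
      have hc : 2 * (Real.pi * (m:ℝ) / N) = θ := by rw [← hhalf]; ring
      rw [hc] at hs
      have hpy := Real.sin_sq_add_cos_sq θ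
      nlinarith
    rw [h2, Real.sqrt_sq (by positivity)]
  -- lower bound on sin
  set M : ℕ := min m (N - m) with hM
  have hM1 : 1 ≤ M := by omega
  have hM2 : 2 * M ≤ N := by omega
  have hMR : (0:ℝ) < M := by exact_mod_cast hM1
  have hsin_lb : 2 * (M:ℝ) / N ≤ Real.sin (Real.pi * m / N) := by
    have key : ∀ x : ℝ, x = Real.pi * M / N → 2 * (M:ℝ) / N ≤ Real.sin x := by
      intro x hx
      subst hx
      have h0 : (0:ℝ) ≤ Real.pi * M / N := by positivity
      have h1 : Real.pi * (M:ℝ) / N ≤ Real.pi / 2 := by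
        rw [div_le_div_iff₀ hNR two_pos]
        have : 2 * (M:ℝ) ≤ N := by exact_mod_cast hM2
        nlinarith [Real.pi_pos]
      have h2 := Real.mul_le_sin h0 h1
      calc 2 * (M:ℝ) / N = 2 / Real.pi * (Real.pi * M / N) := by
            field_simp
        _ ≤ Real.sin (Real.pi * M / N) := h2
    rcases le_total m (N - m) with hc | hc
    · have hMm : M = m := by omega
      exact key _ (by rw [hMm])
    · have hMm : M = N - m := by omega
      have hcast : ((N - m : ℕ) : ℝ) = (N:ℝ) - m := by
        rw [Nat.cast_sub hmN.le]
      have heq : Real.pi * m / N = Real.pi - Real.pi * (M:ℝ) / N := by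
        rw [hMm, hcast]
        field_simp
        ring
      rw [heq, Real.sin_pi_sub]
      exact key _ rfl
  have hsin_pos : 0 < Real.sin (Real.pi * m / N) := lt_of_lt_of_le (by positivity) hsin_lb
  -- final estimate
  rw [norm_mul, norm_div, Complex.norm_real, Real.norm_eq_abs, Complex.norm_natCast, habs]
  have hMpos : (0:ℝ) < 2 * (M:ℝ) := by positivity
  have habs2 : |2 * Real.pi / (N:ℝ)^2| = 2 * Real.pi / (N:ℝ)^2 := by
    rw [_root_.abs_of_nonneg]; positivity
  rw [habs2]
  have h1 : 2 * (M:ℝ) ≤ (N:ℝ) * Real.sin (Real.pi * m / N) := by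
    rw [div_le_iff₀ hNR] at hsin_lb
    linarith [mul_comm (Real.sin (Real.pi * m / N)) (N:ℝ)]
  have hLHS : 2 * Real.pi / (N:ℝ)^2 * ((N:ℝ) / (2 * Real.sin (Real.pi * m / N)))
      = Real.pi / ((N:ℝ) * Real.sin (Real.pi * m / N)) := by
    field_simp
  rw [hLHS]
  exact div_le_div_of_nonneg_left (by positivity) hMpos h1
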